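/- Menon's identity: for every positive integer n, \(\sum_{\substack{1 \le a \le n\\ \gcd(a,n)=1}} \gcd(a-1, n) = \varphi(n)\,\tau(n)\), where \(\varphi\) is Euler's totient function and \(\tau(n)\) is the number of divisors of n. -/
import Mathlib


open Finset

private lemma menon_key (n d : ℕ) (hn2 : 1 < n) (hd : d ∣ n) :
    d.totient * ((Finset.Icc 1 n).filter (fun a => Nat.gcd a n = 1 ∧ d ∣ a - 1)).card
      = n.totient := by
  haveI : NeZero n := ⟨by omega⟩
  have hd0 : 0 < d := Nat.pos_of_dvd_of_pos hd (by omega)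
  haveI : NeZero d := ⟨hd0.ne'⟩
  haveI : Fact (1 < n) := ⟨hn2⟩
  set f := ZMod.unitsMap hd with hf
  -- the number of a ∈ [1,n] coprime to n with a ≡ 1 mod d equals the number of
  -- units u of ZMod n with f u = 1
  have hST : ((Finset.Icc 1 n).filter (fun a => Nat.gcd a n = 1 ∧ d ∣ a - 1)).card
      = (Finset.univ.filter (fun u : (ZMod n)ˣ => f u = 1)).card := by
    refine Finset.card_bij
      (fun a ha => ZMod.unitOfCoprime a (Finset.mem_filter.mp ha).2.1) ?_ ?_ ?_
    · intro a ha
      obtain ⟨hmem, hcop, hdvd⟩ := Finset.mem_filter.mp ha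
      obtain ⟨ha1, han⟩ := Finset.mem_Icc.mp hmem
      refine Finset.mem_filter.mpr ⟨Finset.mem_univ _, ?_⟩
      apply Units.ext
      have h1 : ((1:ℕ) : ZMod d) = ((a:ℕ) : ZMod d) := by
        rw [ZMod.natCast_eq_natCast_iff]
        exact (Nat.modEq_iff_dvd' ha1).mpr hdvd
      show (ZMod.castHom hd (ZMod d)) ((ZMod.unitOfCoprime a _ : (ZMod n)ˣ) : ZMod n) = 1
      rw [ZMod.coe_unitOfCoprime, map_natCast, ← h1, Nat.cast_one]
    · intro a ha b hb hab
      obtain ⟨ha1, han⟩ := Finset.mem_Icc.mp (Finset.mem_filter.mp ha).1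
      obtain ⟨hb1, hbn⟩ := Finset.mem_Icc.mp (Finset.mem_filter.mp hb).1
      have : ((a:ℕ) : ZMod n) = ((b:ℕ) : ZMod n) := by
        have := congrArg (fun u : (ZMod n)ˣ => (u : ZMod n)) hab
        simpa [ZMod.coe_unitOfCoprime] using this
      rw [ZMod.natCast_eq_natCast_iff'] at this
      rcases Nat.lt_or_ge a n with h | h
      · rcases Nat.lt_or_ge b n with h' | h'
        · rwa [Nat.mod_eq_of_lt h, Nat.mod_eq_of_lt h'] at this
        · have hbn' : b = n := le_antisymm hbn h'
          rw [Nat.mod_eq_of_lt h, hbn', Nat.mod_self] at this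
          omega
      · have han' : a = n := le_antisymm han h
        rcases Nat.lt_or_ge b n with h' | h'
        · rw [han', Nat.mod_self, Nat.mod_eq_of_lt h'] at this
          omega
        · have hbn' : b = n := le_antisymm hbn h'
          rw [han', hbn']
    · intro u hu
      have hfu : f u = 1 := (Finset.mem_filter.mp hu).2
      set a := ((u : ZMod n)).val with hav
      have hcop : Nat.Coprime a n := ZMod.val_coe_unit_coprime u
      have hane : a ≠ 0 := by
        intro h
        have : ((u : ZMod n)) = 0 := (ZMod.val_eq_zero _).mp h
        have : IsUnit (0 : ZMod n) := this ▸ u.isUnit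
        rw [isUnit_zero_iff] at this
        exact zero_ne_one this
      have hcast : ((a:ℕ) : ZMod n) = (u : ZMod n) := ZMod.natCast_rightInverse _
      have hadvd : d ∣ a - 1 := by
        have : ((a:ℕ) : ZMod d) = ((1:ℕ) : ZMod d) := by
          have : (ZMod.castHom hd (ZMod d)) ((u : ZMod n)) = 1 := by
            have := congrArg (fun v : (ZMod d)ˣ => (v : ZMod d)) hfu
            simpa [f, ZMod.unitsMap_def] using this
          rw [← hcast] at this
          rw [map_natCast] at this
          simpa using this
        rw [ZMod.natCast_eq_natCast_iff] at this
        exact (Nat.modEq_iff_dvd' (Nat.one_le_iff_ne_zero.mpr hane)).mp this.symm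
      have hmem : a ∈ (Finset.Icc 1 n).filter (fun a => Nat.gcd a n = 1 ∧ d ∣ a - 1) := by
        refine Finset.mem_filter.mpr ⟨Finset.mem_Icc.mpr ⟨by omega, ?_⟩, hcop, hadvd⟩
        exact le_of_lt (lt_of_lt_of_le (ZMod.val_lt _) (le_refl n))
      exact ⟨a, hmem, Units.ext (by simp [ZMod.coe_unitOfCoprime, hcast])⟩
  -- group theory: card units(n) = card units(d) * card ker f
  have hsurj : Function.Surjective f := ZMod.unitsMap_surjective hd
  have hcard : Fintype.card (ZMod n)ˣ = Fintype.card (ZMod d)ˣ * Nat.card f.ker := by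
    rw [← Nat.card_eq_fintype_card, ← Nat.card_eq_fintype_card,
      Subgroup.card_eq_card_quotient_mul_card_subgroup f.ker,
      Nat.card_congr (QuotientGroup.quotientKerEquivOfSurjective f hsurj).toEquiv]
  have hker : Nat.card f.ker
      = (Finset.univ.filter (fun u : (ZMod n)ˣ => f u = 1)).card := by
    rw [Nat.card_congr (Equiv.subtypeEquivRight fun u => f.mem_ker),
      Nat.card_eq_fintype_card, Fintype.card_subtype]
  rw [hST, ← hker, ← ZMod.card_units_eq_totient d, ← ZMod.card_units_eq_totient n, hcard]

/-- Menon's identity. -/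
theorem menon_identity (n : ℕ) (hn : 0 < n) :
    ∑ a ∈ (Finset.Icc 1 n).filter (fun a => Nat.gcd a n = 1), Nat.gcd (a - 1) n =
      Nat.totient n * n.divisors.card := by
  rcases Nat.lt_or_ge 1 n with hn2 | hle
  · set S := (Finset.Icc 1 n).filter (fun a => Nat.gcd a n = 1) with hS
    have step1 : ∀ a ∈ S, Nat.gcd (a - 1) n
        = ∑ d ∈ n.divisors, if d ∣ a - 1 then d.totient else 0 := by
      intro a ha
      have h0 : 0 < n := hn
      have hgcd : Nat.gcd (a-1) n ≠ 0 := fun h =>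
        h0.ne' (Nat.eq_zero_of_gcd_eq_zero_right h)
      have hdiveq : n.divisors.filter (fun d => d ∣ a - 1)
          = (Nat.gcd (a-1) n).divisors := by
        ext e
        simp only [Finset.mem_filter, Nat.mem_divisors, Nat.dvd_gcd_iff, hgcd, h0.ne',
          ne_eq, not_false_iff, and_true]
        tauto
      rw [← Nat.sum_totient (Nat.gcd (a-1) n), ← hdiveq, Finset.sum_filter]
    rw [Finset.sum_congr rfl step1, Finset.sum_comm]
    have step2 : ∀ d ∈ n.divisors,
        (∑ a ∈ S, if d ∣ a - 1 then d.totient else 0) = Nat.totient n := by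
      intro d hdd
      rw [← Finset.sum_filter, Finset.sum_const, smul_eq_mul, mul_comm, hS,
        Finset.filter_filter]
      exact menon_key n d hn2 (Nat.mem_divisors.mp hdd).1
    rw [Finset.sum_congr rfl step2, Finset.sum_const, smul_eq_mul, mul_comm]
  · have : n = 1 := by omega
    subst this
    decide
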